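/- Let m ≥ 1, let x : Fin m → EuclideanSpace ℝ (Fin 3) be a point configuration, let R be a 3×3 real matrix with R * Rᵀ = 1, and let v ∈ ℝ³. If (Q, s) ∈ F(x), then (R * Q, R.mulVec s + v) ∈ F(fun i => R.mulVec (x i) + v); that is, transforming each column of Q by R and the translation part by the Euclidean motion produces a frame element of the transformed configuration. -/

import Mathlib

open Matrix

/-- Reinterpret a plain vector `Fin 3 → ℝ` as a point of `EuclideanSpace ℝ (Fin 3)`
(the identity map on the underlying data). -/
def toE (v : Fin 3 → ℝ) : EuclideanSpace ℝ (Fin 3) := WithLp.toLp 2 v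

/-- The centroid of a point configuration. -/
noncomputable def centroid {m : ℕ} (x : Fin m → EuclideanSpace ℝ (Fin 3)) :
    EuclideanSpace ℝ (Fin 3) :=
  (m : ℝ)⁻¹ • ∑ i, x i

/-- The outer product `p pᵀ` of a vector with itself. -/
def outerSq (p : EuclideanSpace ℝ (Fin 3)) : Matrix (Fin 3) (Fin 3) ℝ :=
  Matrix.of fun a b => p a * p b

/-- The covariance matrix of a point configuration. -/
noncomputable def cov {m : ℕ} (x : Fin m → EuclideanSpace ℝ (Fin 3)) :
    Matrix (Fin 3) (Fin 3) ℝ :=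
  (m : ℝ)⁻¹ • ∑ i, outerSq (x i - centroid x)

/-- `lam` lists the eigenvalues of the symmetric matrix `C` in ascending order:
it is monotone and `C` is orthogonally diagonalized with diagonal `lam`. -/
def IsSortedEigs (C : Matrix (Fin 3) (Fin 3) ℝ) (lam : Fin 3 → ℝ) : Prop :=
  Monotone lam ∧ ∃ P : Matrix (Fin 3) (Fin 3) ℝ,
    P * Pᵀ = 1 ∧ C = P * Matrix.diagonal lam * Pᵀ

/-- The frame set of a point configuration: pairs `(Q, centroid x)` where the `j`-th column
of `Q` is a unit eigenvector of `cov x` for the `j`-th eigenvalue in ascending order. -/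
noncomputable def frameSet {m : ℕ} (x : Fin m → EuclideanSpace ℝ (Fin 3)) :
    Set (Matrix (Fin 3) (Fin 3) ℝ × EuclideanSpace ℝ (Fin 3)) :=
  { Qs | Qs.2 = centroid x ∧ ∃ lam : Fin 3 → ℝ, IsSortedEigs (cov x) lam ∧
      ∀ j : Fin 3, ‖toE (Qs.1ᵀ j)‖ = 1 ∧
        (cov x).mulVec (Qs.1ᵀ j) = lam j • Qs.1ᵀ j }


lemma euc_sum_apply {m : ℕ} (f : Fin m → EuclideanSpace ℝ (Fin 3)) (a : Fin 3) :
    (∑ i, f i) a = ∑ i, f i a := by rw [WithLp.ofLp_sum]; exact Finset.sum_apply a Finset.univ _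

lemma centroid_map {m : ℕ} (hm : 1 ≤ m) (x : Fin m → EuclideanSpace ℝ (Fin 3))
    (R : Matrix (Fin 3) (Fin 3) ℝ) (v : EuclideanSpace ℝ (Fin 3)) :
    centroid (fun i => toE (R.mulVec (x i)) + v)
      = toE (R.mulVec (centroid x)) + v := by
  have hm' : (m : ℝ) ≠ 0 := by positivity
  ext a
  simp only [centroid, toE, PiLp.toLp_apply, PiLp.add_apply, PiLp.smul_apply, euc_sum_apply,
    smul_eq_mul, mulVec, dotProduct]
  simp only [Finset.sum_add_distrib, Finset.sum_const, Finset.card_univ, Fintype.card_fin,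
    nsmul_eq_mul, mul_add, Finset.mul_sum]
  rw [Finset.sum_comm]
  field_simp

lemma outerSq_map (R : Matrix (Fin 3) (Fin 3) ℝ) (p : EuclideanSpace ℝ (Fin 3)) :
    outerSq (toE (R.mulVec p)) = R * outerSq p * Rᵀ := by
  ext a b
  simp only [outerSq, toE, PiLp.toLp_apply, Matrix.of_apply, mul_apply, mulVec, dotProduct,
    transpose_apply, Fin.sum_univ_succ, Fin.sum_univ_zero]
  ring

lemma cov_map {m : ℕ} (hm : 1 ≤ m) (x : Fin m → EuclideanSpace ℝ (Fin 3))
    (R : Matrix (Fin 3) (Fin 3) ℝ) (v : EuclideanSpace ℝ (Fin 3)) :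
    cov (fun i => toE (R.mulVec (x i)) + v) = R * cov x * Rᵀ := by
  have hdiff : ∀ i : Fin m, (toE (R.mulVec (x i)) + v) - centroid (fun i => toE (R.mulVec (x i)) + v)
      = toE (R.mulVec (x i - centroid x)) := by
    intro i
    rw [centroid_map hm x R v]
    ext a
    simp only [toE, PiLp.toLp_apply, PiLp.add_apply, PiLp.sub_apply, Pi.sub_apply, mulVec, dotProduct,
      Fin.sum_univ_succ, Fin.sum_univ_zero]
    ring
  simp only [cov, hdiff, ← WithLp.ofLp_sub, outerSq_map]
  rw [← Finset.sum_mul, ← Matrix.mul_sum, Matrix.mul_smul, Matrix.smul_mul]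

lemma norm_mulVec (R : Matrix (Fin 3) (Fin 3) ℝ) (hRtR : Rᵀ * R = 1) (q : Fin 3 → ℝ) :
    ‖toE (R.mulVec q)‖ = ‖toE q‖ := by
  have hnorm : ∀ w : Fin 3 → ℝ, ‖toE w‖ = Real.sqrt (w ⬝ᵥ w) := by
    intro w
    rw [EuclideanSpace.norm_eq]
    congr 1
    simp [dotProduct, toE, Real.norm_eq_abs, sq_abs, sq]
  have key : R.mulVec q ⬝ᵥ R.mulVec q = q ⬝ᵥ q := by
    rw [Matrix.dotProduct_mulVec, ← Matrix.mulVec_transpose, Matrix.mulVec_mulVec, hRtR,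
      Matrix.one_mulVec]
  rw [hnorm, hnorm, key]

/-- **Euclidean motions map frame elements to frame elements.** If `R * Rᵀ = 1`,
`v ∈ ℝ³`, and `(Q, s)` belongs to the frame set of `x`, then `(R * Q, R s + v)` belongs
to the frame set of the transformed configuration `i ↦ R (x i) + v`. -/
theorem frameSet_map_mem {m : ℕ} (hm : 1 ≤ m) (x : Fin m → EuclideanSpace ℝ (Fin 3))
    (R : Matrix (Fin 3) (Fin 3) ℝ) (hR : R * Rᵀ = 1) (v : EuclideanSpace ℝ (Fin 3))
    (Q : Matrix (Fin 3) (Fin 3) ℝ) (s : EuclideanSpace ℝ (Fin 3))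
    (hQs : (Q, s) ∈ frameSet x) :
    (R * Q, toE (R.mulVec s) + v) ∈ frameSet (fun i => toE (R.mulVec (x i)) + v) := by
  obtain ⟨hs, lam, ⟨hmono, P, hP, hC⟩, hcols⟩ := hQs
  have hs' : s = centroid x := hs
  have hRtR : Rᵀ * R = 1 := mul_eq_one_comm.mp hR
  have hcov : cov (fun i => toE (R.mulVec (x i)) + v) = R * cov x * Rᵀ := cov_map hm x R v
  have hcol : ∀ j : Fin 3, (R * Q)ᵀ j = R.mulVec (Qᵀ j) := by
    intro j; funext a
    simp [mul_apply, mulVec, dotProduct, transpose_apply]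
  refine ⟨?_, lam, ⟨hmono, R * P, ?_, ?_⟩, ?_⟩
  · show toE (R.mulVec s) + v = _
    rw [centroid_map hm x R v, hs']
  · rw [Matrix.transpose_mul, ← Matrix.mul_assoc, Matrix.mul_assoc R P, hP, Matrix.mul_one, hR]
  · rw [hcov, hC, Matrix.transpose_mul]; noncomm_ring
  · intro j
    obtain ⟨h1, h2⟩ := hcols j
    have h1' : ‖toE (Qᵀ j)‖ = 1 := h1
    have h2' : (cov x).mulVec (Qᵀ j) = lam j • Qᵀ j := h2
    refine ⟨?_, ?_⟩
    · show ‖toE ((R * Q)ᵀ j)‖ = 1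
      rw [hcol j, norm_mulVec R hRtR, h1']
    · show (cov _).mulVec ((R * Q)ᵀ j) = lam j • (R * Q)ᵀ j
      rw [hcol j, hcov, Matrix.mulVec_mulVec, Matrix.mul_assoc, hRtR, Matrix.mul_one,
        ← Matrix.mulVec_mulVec, h2', Matrix.mulVec_smul]
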